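/- arXiv:1411.1246 — 3 statements merged into one kernel-verified Lean document; each statement's English description precedes it below -/
import Mathlib

section
/- Let p be a prime with p > 2. Then W_2 = {2p, 2p²−2p−2} ∪ { p^n(2p−2) + 2p−2 : n ≥ 2 }. -/
/-- The shift `λ ∥ n` of a weight `λ` linked to zero (i.e. `λ ≡ 0` or `λ ≡ 2p−2 mod 2p`). -/
def shift (p lam n : ℕ) : ℕ :=
  if lam % (2 * p) = 0 then
    (if Even n then p * (lam + n) else p * (lam + n) + p - 2)
  else
    (if Even n then p * (lam - n) else p * (lam - n) + p - 2)

/-- The sets `W_q` of maximally untwisted `q`-cohomological weights, defined recursively: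
`W_0 = {0}` and `W_q = { (p^n · λᵢ) ∥ (q−i) : n ≥ 0, 0 ≤ i < q, λᵢ ∈ W_i }`. -/
def W (p : ℕ) : ℕ → Set ℕ
  | 0 => {0}
  | q + 1 => {mu | ∃ (n i : ℕ) (_ : i < q + 1) (lam : ℕ),
      lam ∈ W p i ∧ mu = shift p (p ^ n * lam) (q + 1 - i)}

lemma shift_zero_two (p : ℕ) : shift p 0 2 = 2 * p := by
  simp [shift]; ring

lemma shift_zero_one (p : ℕ) (h2 : 2 < p) : shift p 0 1 = 2 * p - 2 := by
  simp [shift, Nat.not_even_iff_odd, Nat.odd_iff]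
  omega

lemma W1 (p : ℕ) (h2 : 2 < p) : W p 1 = {2 * p - 2} := by
  ext x
  simp only [W, Nat.lt_one_iff, Set.mem_setOf_eq, Set.mem_singleton_iff]
  constructor
  · rintro ⟨n, i, hi, lam, hlam, rfl⟩
    have hi0 : i = 0 := by omega
    subst hi0
    simp only [W, Set.mem_singleton_iff] at hlam
    subst hlam
    simp [shift_zero_one p h2]
  · rintro rfl
    exact ⟨0, 0, Nat.lt_succ_self 0, 0, (by rw [W]; exact Set.mem_singleton 0), by simp [shift_zero_one p h2]⟩

lemma shift_lam_one (p : ℕ) (h2 : 2 < p) :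
    shift p (2 * p - 2) 1 = 2 * p ^ 2 - 2 * p - 2 := by
  have hmod : (2 * p - 2) % (2 * p) = 2 * p - 2 := Nat.mod_eq_of_lt (by omega)
  unfold shift
  rw [if_neg (by rw [hmod]; omega), if_neg (by decide : ¬ Even 1)]
  have h1 : p * (2 * p - 2 - 1) = 2 * (p * p) - 3 * p := by
    rw [show 2 * p - 2 - 1 = 2 * p - 3 by omega, Nat.mul_sub]
    ring_nf
  have h2' : p ^ 2 = p * p := sq p
  have h3 : 3 * p ≤ p * p := by nlinarith
  omega

lemma shift_pow_one (p : ℕ) (h2 : 2 < p) (m : ℕ) :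
    shift p (p ^ (m + 1) * (2 * p - 2)) 1 = p ^ (m + 2) * (2 * p - 2) + (2 * p - 2) := by
  have hM : p ^ (m + 1) * (2 * p - 2) = 2 * p * (p ^ m * (p - 1)) := by
    rw [show 2 * p - 2 = 2 * (p - 1) by omega, pow_succ]
    ring
  have hmod : (p ^ (m + 1) * (2 * p - 2)) % (2 * p) = 0 := by
    rw [hM]; exact Nat.mul_mod_right _ _
  unfold shift
  rw [if_pos hmod, if_neg (by decide : ¬ Even 1)]
  have hpow : p * (p ^ (m + 1) * (2 * p - 2)) = p ^ (m + 2) * (2 * p - 2) := by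
    rw [pow_succ]; ring
  have hdist : p * (p ^ (m + 1) * (2 * p - 2) + 1)
      = p * (p ^ (m + 1) * (2 * p - 2)) + p := by ring
  omega

/-- For a prime `p > 2`, `W_2 = {2p, 2p² − 2p − 2} ∪ { pⁿ(2p−2) + 2p − 2 : n ≥ 2 }`. -/
theorem stmt_4 (p : ℕ) (hp : p.Prime) (h2 : 2 < p) :
    W p 2 = ({2 * p, 2 * p ^ 2 - 2 * p - 2} : Set ℕ)
      ∪ {x | ∃ n : ℕ, 2 ≤ n ∧ x = p ^ n * (2 * p - 2) + (2 * p - 2)} := by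
  ext x
  simp only [W, Set.mem_setOf_eq, Set.mem_union, Set.mem_insert_iff,
    Set.mem_singleton_iff]
  constructor
  · rintro ⟨n, i, hi, lam, hlam, rfl⟩
    interval_cases i
    · simp only [W, Set.mem_singleton_iff] at hlam
      subst hlam
      simp [shift_zero_two]
    · rw [W1 p h2, Set.mem_singleton_iff] at hlam
      subst hlam
      cases n with
      | zero => simp [shift_lam_one p h2]
      | succ m =>
        right
        exact ⟨m + 2, by omega, by simp [shift_pow_one p h2 m]⟩
  · rintro (⟨rfl | rfl⟩ | ⟨n, hn, rfl⟩)
    · exact ⟨0, 0, by omega, 0, (by rw [W]; exact Set.mem_singleton 0), by simp [shift_zero_two]⟩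
    · exact ⟨0, 1, by omega, 2 * p - 2, by rw [W1 p h2]; rfl,
        by simp [shift_lam_one p h2]⟩
    · obtain ⟨m, rfl⟩ : ∃ m, n = m + 2 := ⟨n - 2, by omega⟩
      exact ⟨m + 1, 1, by omega, 2 * p - 2, by rw [W1 p h2]; rfl,
        by simp [shift_pow_one p h2 m]⟩
end

section
/- Let p be a prime with p > 3. Then W_3 = {4p−2, 2p²−4p, 2p²+2p−2, 2p³−2p²−2p−2} ∪ { p^n(2p−2) + 2p : n ≥ 2 } ∪ { p^n(2p−2) + 2p²−2p−2 : n ≥ 3 } ∪ { p^n·λ + 2p−2 : n ≥ 2, λ ∈ W_2 }. -/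
lemma mem_W_succ (p q mu : ℕ) :
    mu ∈ W p (q+1) ↔ ∃ (n i : ℕ) (_ : i < q + 1) (lam : ℕ),
      lam ∈ W p i ∧ mu = shift p (p ^ n * lam) (q + 1 - i) := by rw [W]; rfl

lemma mem_W0 (p lam : ℕ) (h : lam ∈ W p 0) : lam = 0 := by simpa [W] using h

lemma modzero (p lam n : ℕ) (he : Even lam) (hn : 1 ≤ n) : p ^ n * lam % (2 * p) = 0 := by
  obtain ⟨k, rfl⟩ := he
  obtain ⟨m, rfl⟩ := Nat.exists_eq_add_of_le hn
  exact Nat.mod_eq_zero_of_dvd ⟨p ^ m * k, by ring⟩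

lemma shift_eval1 (p lam : ℕ) (h : lam % (2 * p) = 0) :
    shift p lam 1 = p * (lam + 1) + p - 2 := by
  rw [shift, if_pos h, if_neg (by decide)]

lemma shift_eval1' (p lam : ℕ) (h : lam % (2 * p) ≠ 0) :
    shift p lam 1 = p * (lam - 1) + p - 2 := by
  rw [shift, if_neg h, if_neg (by decide)]

lemma shift_eval2 (p lam : ℕ) (h : lam % (2 * p) = 0) :
    shift p lam 2 = p * (lam + 2) := by
  rw [shift, if_pos h, if_pos (by decide)]

lemma shift_eval2' (p lam : ℕ) (h : lam % (2 * p) ≠ 0) :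
    shift p lam 2 = p * (lam - 2) := by
  rw [shift, if_neg h, if_pos (by decide)]

lemma shift_eval3 (p lam : ℕ) (h : lam % (2 * p) = 0) :
    shift p lam 3 = p * (lam + 3) + p - 2 := by
  rw [shift, if_pos h, if_neg (by decide)]

/-- shift of p^n*lam by 1 in the congruent-to-0 case. -/
lemma Gshift (p n lam : ℕ) :
    p * (p ^ n * lam + 1) + p - 2 = p ^ (n + 1) * lam + (2 * p) - 2 := by
  have e : p * (p ^ n * lam) = p ^ (n + 1) * lam := by ring
  rw [mul_add, mul_one]
  omega

lemma mod2p2 (p : ℕ) (hp : 2 ≤ p) : (2 * p - 2) % (2 * p) = 2 * p - 2 :=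
  Nat.mod_eq_of_lt (by omega)

lemma mod2p2' (p : ℕ) (hp : 2 ≤ p) : (2 * p - 2) % (2 * p) ≠ 0 := by
  rw [mod2p2 p hp]; omega

lemma modbig (p : ℕ) (hp : 3 < p) : (2 * p ^ 2 - 2 * p - 2) % (2 * p) = 2 * p - 2 := by
  have e1 : (p - 2) * (2 * p) = p * (2 * p) - 2 * (2 * p) := Nat.sub_mul p 2 (2 * p)
  have e2 : p * (2 * p) = 2 * p ^ 2 := by ring
  have e3 : 4 * p + 2 ≤ 2 * p ^ 2 := by nlinarith
  rw [show 2 * p ^ 2 - 2 * p - 2 = 2 * p - 2 + (p - 2) * (2 * p) by omega,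
    Nat.add_mul_mod_self_right, mod2p2 p (by omega)]

lemma modsum (p m : ℕ) (hp : 2 ≤ p) (hm : 1 ≤ m) :
    (p ^ m * (2 * p - 2) + (2 * p - 2)) % (2 * p) = 2 * p - 2 := by
  have he : Even (2 * p - 2) := by rw [Nat.even_iff]; omega
  rw [Nat.add_mod, modzero p _ m he hm, zero_add, mod2p2 p hp, mod2p2 p hp]

lemma W1_eq (p : ℕ) (hp : 2 ≤ p) : W p 1 = {2 * p - 2} := by
  ext mu
  rw [mem_W_succ]
  simp only [Set.mem_singleton_iff]
  constructor
  · rintro ⟨n, i, hi, lam, hlam, rfl⟩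
    interval_cases i
    obtain rfl := mem_W0 p lam hlam
    rw [mul_zero, shift_eval1 p 0 (by simp)]
    omega
  · rintro rfl
    refine ⟨0, 0, by omega, 0, by simp [W], ?_⟩
    rw [mul_zero, shift_eval1 p 0 (by simp)]
    omega

lemma W2_eq (p : ℕ) (hp : 3 < p) :
    W p 2 = {x | x = 2 * p ∨ x = 2 * p ^ 2 - 2 * p - 2 ∨
      ∃ m, 2 ≤ m ∧ x = p ^ m * (2 * p - 2) + (2 * p - 2)} := by
  have e2 : p * (2 * p) = 2 * p ^ 2 := by ring
  have e3 : 4 * p + 2 ≤ 2 * p ^ 2 := by nlinarith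
  ext mu
  rw [mem_W_succ]
  simp only [Set.mem_setOf_eq]
  constructor
  · rintro ⟨n, i, hi, lam, hlam, rfl⟩
    interval_cases i
    · obtain rfl := mem_W0 p lam hlam
      left
      rw [mul_zero, shift_eval2 p 0 (by simp)]
      omega
    · rw [W1_eq p (by omega), Set.mem_singleton_iff] at hlam
      subst hlam
      right
      rcases Nat.eq_zero_or_pos n with rfl | hn
      · left
        rw [pow_zero, one_mul, shift_eval1' p _ (mod2p2' p (by omega))]
        rw [show 2 * p - 2 - 1 = 2 * p - 3 by omega, Nat.mul_sub]
        omega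
      · right
        refine ⟨n + 1, by omega, ?_⟩
        rw [shift_eval1 p _ (modzero p _ n (by rw [Nat.even_iff]; omega) hn), Gshift]
        omega
  · rintro (rfl | rfl | ⟨m, hm, rfl⟩)
    · refine ⟨0, 0, by omega, 0, by simp [W], ?_⟩
      rw [mul_zero, shift_eval2 p 0 (by simp)]
      omega
    · refine ⟨0, 1, by omega, 2 * p - 2, by rw [W1_eq p (by omega)]; rfl, ?_⟩
      rw [pow_zero, one_mul, shift_eval1' p _ (mod2p2' p (by omega))]
      rw [show 2 * p - 2 - 1 = 2 * p - 3 by omega, Nat.mul_sub]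
      omega
    · refine ⟨m - 1, 1, by omega, 2 * p - 2, by rw [W1_eq p (by omega)]; rfl, ?_⟩
      rw [shift_eval1 p _ (modzero p _ (m - 1) (by rw [Nat.even_iff]; omega) (by omega)),
        Gshift, show m - 1 + 1 = m by omega]
      omega

/-- For a prime `p > 3`,
`W_3 = {4p−2, 2p²−4p, 2p²+2p−2, 2p³−2p²−2p−2} ∪ { pⁿ(2p−2)+2p : n ≥ 2 }`
`∪ { pⁿ(2p−2)+2p²−2p−2 : n ≥ 3 } ∪ { pⁿ·λ + 2p−2 : n ≥ 2, λ ∈ W_2 }`. -/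
theorem stmt_5 (p : ℕ) (hp : p.Prime) (h3 : 3 < p) :
    W p 3 = ({4 * p - 2, 2 * p ^ 2 - 4 * p, 2 * p ^ 2 + 2 * p - 2,
        2 * p ^ 3 - 2 * p ^ 2 - 2 * p - 2} : Set ℕ)
      ∪ {x | ∃ n : ℕ, 2 ≤ n ∧ x = p ^ n * (2 * p - 2) + 2 * p}
      ∪ {x | ∃ n : ℕ, 3 ≤ n ∧ x = p ^ n * (2 * p - 2) + (2 * p ^ 2 - 2 * p - 2)}
      ∪ {x | ∃ n : ℕ, 2 ≤ n ∧ ∃ lam ∈ W p 2, x = p ^ n * lam + (2 * p - 2)} := by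
  have e2 : p * (2 * p) = 2 * p ^ 2 := by ring
  have e2' : p * (2 * p ^ 2) = 2 * p ^ 3 := by ring
  have e3 : 4 * p + 2 ≤ 2 * p ^ 2 := by nlinarith
  have e4 : 2 * p ^ 2 + 3 * p + 2 ≤ 2 * p ^ 3 := by nlinarith
  ext mu
  rw [mem_W_succ]
  simp only [Set.mem_union, Set.mem_insert_iff, Set.mem_singleton_iff, Set.mem_setOf_eq]
  constructor
  · rintro ⟨n, i, hi, lam, hlam, rfl⟩
    interval_cases i
    · -- i = 0 : shift p 0 3 = 4p-2
      obtain rfl := mem_W0 p lam hlam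
      left; left; left
      rw [mul_zero, shift_eval3 p 0 (by simp)]
      omega
    · -- i = 1 : lam = 2p-2
      rw [W1_eq p (by omega), Set.mem_singleton_iff] at hlam
      subst hlam
      rcases Nat.eq_zero_or_pos n with rfl | hn
      · left; left; left
        rw [pow_zero, one_mul, shift_eval2' p _ (mod2p2' p (by omega))]
        rw [show 2 * p - 2 - 2 = 2 * p - 4 by omega, Nat.mul_sub]
        right; left
        omega
      · left; left; right
        refine ⟨n + 1, by omega, ?_⟩
        have he : Even (2 * p - 2) := by rw [Nat.even_iff]; omega
        rw [shift_eval2 p _ (modzero p _ n he hn), mul_add]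
        have e : p * (p ^ n * (2 * p - 2)) = p ^ (n + 1) * (2 * p - 2) := by ring
        omega
    · -- i = 2 : lam ∈ W p 2
      rw [W2_eq p h3, Set.mem_setOf_eq] at hlam
      rcases hlam with rfl | rfl | ⟨m, hm, rfl⟩
      · -- lam = 2p
        have hmod : p ^ n * (2 * p) % (2 * p) = 0 := Nat.mod_eq_zero_of_dvd ⟨p ^ n, by ring⟩
        rw [shift_eval1 p _ hmod, Gshift]
        rcases Nat.eq_zero_or_pos n with rfl | hn
        · left; left; left
          have e : p ^ (0 + 1) * (2 * p) = 2 * p ^ 2 := by ring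
          omega
        · right
          refine ⟨n + 1, by omega, 2 * p, by rw [W2_eq p h3]; exact Or.inl rfl, ?_⟩
          omega
      · -- lam = 2p^2 - 2p - 2
        rcases Nat.eq_zero_or_pos n with rfl | hn
        · left; left; left
          rw [pow_zero, one_mul, shift_eval1' p _ (by rw [modbig p h3]; omega)]
          rw [show 2 * p ^ 2 - 2 * p - 2 - 1 = 2 * p ^ 2 - (2 * p + 3) by omega, Nat.mul_sub]
          have e5 : p * (2 * p + 3) = 2 * p ^ 2 + 3 * p := by ring
          right; right; right
          omega
        · right
          have he : Even (2 * p ^ 2 - 2 * p - 2) := by rw [Nat.even_iff]; omega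
          rw [shift_eval1 p _ (modzero p _ n he hn), Gshift]
          refine ⟨n + 1, by omega, 2 * p ^ 2 - 2 * p - 2,
            by rw [W2_eq p h3]; exact Or.inr (Or.inl rfl), ?_⟩
          omega
      · -- lam = p^m (2p-2) + (2p-2), m ≥ 2
        rcases Nat.eq_zero_or_pos n with rfl | hn
        · left; right
          refine ⟨m + 1, by omega, ?_⟩
          rw [pow_zero, one_mul, shift_eval1' p _ (by rw [modsum p m (by omega) (by omega)]; omega)]
          rw [show p ^ m * (2 * p - 2) + (2 * p - 2) - 1 = p ^ m * (2 * p - 2) + (2 * p - 3) by omega,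
            mul_add]
          have e5 : p * (p ^ m * (2 * p - 2)) = p ^ (m + 1) * (2 * p - 2) := by ring
          have e6 : p * (2 * p - 3) = p * (2 * p) - p * 3 := Nat.mul_sub p (2 * p) 3
          omega
        · right
          have he : Even (p ^ m * (2 * p - 2) + (2 * p - 2)) := by
            have h1 : Even (2 * p - 2) := by rw [Nat.even_iff]; omega
            exact (h1.mul_left _).add h1
          rw [shift_eval1 p _ (modzero p _ n he hn), Gshift]
          refine ⟨n + 1, by omega, p ^ m * (2 * p - 2) + (2 * p - 2),
            by rw [W2_eq p h3]; exact Or.inr (Or.inr ⟨m, hm, rfl⟩), ?_⟩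
          omega
  · rintro ((((rfl | rfl | rfl | rfl) | ⟨n, hn, rfl⟩) | ⟨n, hn, rfl⟩) | ⟨n, hn, lam, hlam, rfl⟩)
    · -- 4p - 2
      refine ⟨0, 0, by omega, 0, by simp [W], ?_⟩
      rw [mul_zero, shift_eval3 p 0 (by simp)]
      omega
    · -- 2p^2 - 4p
      refine ⟨0, 1, by omega, 2 * p - 2, by rw [W1_eq p (by omega)]; rfl, ?_⟩
      rw [pow_zero, one_mul, shift_eval2' p _ (mod2p2' p (by omega))]
      rw [show 2 * p - 2 - 2 = 2 * p - 4 by omega, Nat.mul_sub]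
      omega
    · -- 2p^2 + 2p - 2
      refine ⟨0, 2, by omega, 2 * p, by rw [W2_eq p h3]; exact Or.inl rfl, ?_⟩
      rw [shift_eval1 p _ (Nat.mod_eq_zero_of_dvd ⟨p ^ 0, by ring⟩), Gshift, pow_one]
      omega
    · -- 2p^3 - 2p^2 - 2p - 2
      refine ⟨0, 2, by omega, 2 * p ^ 2 - 2 * p - 2,
        by rw [W2_eq p h3]; exact Or.inr (Or.inl rfl), ?_⟩
      rw [pow_zero, one_mul, shift_eval1' p _ (by rw [modbig p h3]; omega)]
      rw [show 2 * p ^ 2 - 2 * p - 2 - 1 = 2 * p ^ 2 - (2 * p + 3) by omega, Nat.mul_sub]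
      have e5 : p * (2 * p + 3) = 2 * p ^ 2 + 3 * p := by ring
      omega
    · -- p^n (2p-2) + 2p, n ≥ 2
      refine ⟨n - 1, 1, by omega, 2 * p - 2, by rw [W1_eq p (by omega)]; rfl, ?_⟩
      have he : Even (2 * p - 2) := by rw [Nat.even_iff]; omega
      rw [shift_eval2 p _ (modzero p _ (n - 1) he (by omega)), mul_add]
      have e : p * (p ^ (n - 1) * (2 * p - 2)) = p ^ (n - 1 + 1) * (2 * p - 2) := by ring
      rw [show n - 1 + 1 = n by omega] at e
      omega
    · -- p^n (2p-2) + (2p^2 - 2p - 2), n ≥ 3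
      refine ⟨0, 2, by omega, p ^ (n - 1) * (2 * p - 2) + (2 * p - 2),
        by rw [W2_eq p h3]; exact Or.inr (Or.inr ⟨n - 1, by omega, rfl⟩), ?_⟩
      rw [pow_zero, one_mul,
        shift_eval1' p _ (by rw [modsum p (n - 1) (by omega) (by omega)]; omega)]
      rw [show p ^ (n - 1) * (2 * p - 2) + (2 * p - 2) - 1
          = p ^ (n - 1) * (2 * p - 2) + (2 * p - 3) by omega, mul_add]
      have e5 : p * (p ^ (n - 1) * (2 * p - 2)) = p ^ (n - 1 + 1) * (2 * p - 2) := by ring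
      rw [show n - 1 + 1 = n by omega] at e5
      have e6 : p * (2 * p - 3) = p * (2 * p) - p * 3 := Nat.mul_sub p (2 * p) 3
      omega
    · -- p^n lam + (2p - 2), n ≥ 2, lam ∈ W p 2
      have he : Even lam := by
        rw [W2_eq p h3, Set.mem_setOf_eq] at hlam
        rcases hlam with rfl | rfl | ⟨m, hm, rfl⟩
        · exact even_two_mul p
        · rw [Nat.even_iff]; omega
        · have h1 : Even (2 * p - 2) := by rw [Nat.even_iff]; omega
          exact (h1.mul_left _).add h1
      refine ⟨n - 1, 2, by omega, lam, hlam, ?_⟩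
      rw [shift_eval1 p _ (modzero p _ (n - 1) he (by omega)), Gshift,
        show n - 1 + 1 = n by omega]
      omega
end

section
/- Let p be a prime and q a natural number with p > q ≥ 1. Then every element λ of W_q satisfies λ ≥ 2p−2. In particular, in forming W_{q'} for q' ≤ q the subtraction λ−n occurring in the shift operation never goes below zero. -/
/-- For a prime `p` and `p > q ≥ 1`, every element of `W_q` is at least `2p − 2`. -/
theorem stmt_7 (p q : ℕ) (hp : p.Prime) (hq : q < p) (hq1 : 1 ≤ q) :
    ∀ lam ∈ W p q, 2 * p - 2 ≤ lam := by
  have hp2 : 2 ≤ p := hp.two_le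
  revert hq hq1
  induction q using Nat.strong_induction_on with
  | _ q ih =>
    intro hq hq1
    obtain ⟨k, rfl⟩ : ∃ k, q = k + 1 := ⟨q - 1, by omega⟩
    intro lam hlam
    simp only [W, Set.mem_setOf_eq] at hlam
    obtain ⟨n, i, hik, lam0, hlam0, rfl⟩ := hlam
    set x := p ^ n * lam0 with hxdef
    set m := k + 1 - i with hmdef
    have hm1 : 1 ≤ m := by omega
    by_cases hmod : x % (2 * p) = 0
    · simp only [shift, hmod, if_true]
      by_cases hev : Even m
      · have hm2 : 2 ≤ m := by
          rcases hev with ⟨t, ht⟩; omega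
        simp only [hev, if_true]
        have h1 : p * 2 ≤ p * (x + m) := Nat.mul_le_mul_left _ (by omega)
        omega
      · simp only [hev, if_false]
        have h1 : p * 1 ≤ p * (x + m) := Nat.mul_le_mul_left _ (by omega)
        omega
    · have hlam0ne : lam0 ≠ 0 := by
        rintro rfl
        exact hmod (by simp [hxdef])
      have hi1 : 1 ≤ i := by
        rcases Nat.eq_zero_or_pos i with h | h
        · subst h
          simp only [W, Set.mem_singleton_iff] at hlam0
          exact absurd hlam0 hlam0ne
        · exact h
      have hl : 2 * p - 2 ≤ lam0 := ih i (by omega) (by omega) (by omega) lam0 hlam0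
      have hpn : 1 ≤ p ^ n := Nat.one_le_pow _ _ (by omega)
      have hx : lam0 ≤ x := by
        calc lam0 = 1 * lam0 := (one_mul _).symm
        _ ≤ p ^ n * lam0 := Nat.mul_le_mul_right _ hpn
      have hmle : m ≤ p - 2 := by omega
      have hxm : p ≤ x - m := by omega
      have h1 : p * p ≤ p * (x - m) := Nat.mul_le_mul_left _ hxm
      have h2 : 2 * p ≤ p * p := Nat.mul_le_mul_right _ hp2
      simp only [shift, hmod, if_false]
      by_cases hev : Even m
      · simp only [hev, if_true]; omega
      · simp only [hev, if_false]; omega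
end
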